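/- arXiv:2402.12535 — 6 statements merged into one kernel-verified Lean document; each statement's English description precedes it below -/
import Mathlib

section
/- For all real u > 1/√2, the function f(u) = Erf(u) - (1 - exp(-u²))/(u√π) satisfies f(u) ≥ 1 - 1/(u√π). -/
open Real MeasureTheory Set Filter

noncomputable def erf (u : ℝ) : ℝ := (2 / Real.sqrt Real.pi) * ∫ t in (0:ℝ)..u, Real.exp (-t ^ 2)

noncomputable def f (u : ℝ) : ℝ := erf u - (1 - Real.exp (-u ^ 2)) / (u * Real.sqrt Real.pi)

lemma exp_sq_eq (t : ℝ) : Real.exp (-t ^ 2) = Real.exp (-1 * t ^ 2) := by ring_nf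

lemma integral_t_exp (u : ℝ) :
    ∫ t in Ioi u, t * Real.exp (-t ^ 2) = Real.exp (-u ^ 2) / 2 := by
  have h : ∀ x ∈ Ici u, HasDerivAt (fun t => -Real.exp (-t ^ 2) / 2)
      (x * Real.exp (-x ^ 2)) x := by
    intro x _
    have : HasDerivAt (fun t : ℝ => -t ^ 2) (-(2 * x)) x := by
      simpa using ((hasDerivAt_pow 2 x).fun_neg)
    have := (this.exp).fun_neg.div_const 2
    refine this.congr_deriv ?_
    ring_nf
  have hint : IntegrableOn (fun t => t * Real.exp (-t ^ 2)) (Ioi u) := by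
    have := integrable_mul_exp_neg_mul_sq (b := 1) one_pos
    simp only [neg_one_mul] at this
    exact this.integrableOn
  have hlim : Tendsto (fun t : ℝ => -Real.exp (-t ^ 2) / 2) atTop (nhds 0) := by
    have : Tendsto (fun t : ℝ => -t ^ 2) atTop atBot := by
      apply tendsto_neg_atBot_iff.mpr
      exact tendsto_pow_atTop (by norm_num)
    have := (Real.tendsto_exp_atBot.comp this).neg.div_const 2
    simpa using this
  have := integral_Ioi_of_hasDerivAt_of_tendsto' h hint hlim
  rw [this]; ring

lemma tail_bound {u : ℝ} (hu : 0 < u) :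
    ∫ t in Ioi u, Real.exp (-t ^ 2) ≤ Real.exp (-u ^ 2) / (2 * u) := by
  have h1 : ∫ t in Ioi u, Real.exp (-t ^ 2) ≤ ∫ t in Ioi u, (t / u) * Real.exp (-t ^ 2) := by
    apply setIntegral_mono_on
    · have := integrable_exp_neg_mul_sq (b := 1) one_pos
      simp only [neg_one_mul] at this
      exact this.integrableOn
    · have := integrable_mul_exp_neg_mul_sq (b := 1) one_pos
      simp only [neg_one_mul] at this
      apply (this.integrableOn.div_const u).congr
      filter_upwards with x
      field_simp
    · exact measurableSet_Ioi
    · intro x hx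
      have hx1 : 1 ≤ x / u := (one_le_div hu).mpr (le_of_lt hx)
      nth_rewrite 1 [← one_mul (Real.exp (-x ^ 2))]
      exact mul_le_mul_of_nonneg_right hx1 (Real.exp_pos _).le
  have h2 : ∫ t in Ioi u, (t / u) * Real.exp (-t ^ 2)
      = (∫ t in Ioi u, t * Real.exp (-t ^ 2)) / u := by
    rw [← integral_div]
    congr 1; ext t; ring
  rw [h2, integral_t_exp] at h1
  calc ∫ t in Ioi u, Real.exp (-t ^ 2) ≤ Real.exp (-u ^ 2) / 2 / u := h1
    _ = Real.exp (-u ^ 2) / (2 * u) := by ring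

lemma erf_lower {u : ℝ} (hu : 0 < u) :
    erf u ≥ 1 - Real.exp (-u ^ 2) / (u * Real.sqrt Real.pi) := by
  have hπ : (0:ℝ) < Real.sqrt Real.pi := Real.sqrt_pos.mpr Real.pi_pos
  have hint : IntegrableOn (fun t => Real.exp (-t ^ 2)) (Ioi 0) := by
    have := integrable_exp_neg_mul_sq (b := 1) one_pos
    simp only [neg_one_mul] at this
    exact this.integrableOn
  have hsplit : (∫ t in Ioc 0 u, Real.exp (-t ^ 2)) + ∫ t in Ioi u, Real.exp (-t ^ 2)
      = ∫ t in Ioi (0:ℝ), Real.exp (-t ^ 2) := by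
    rw [← setIntegral_union (Set.Ioc_disjoint_Ioi le_rfl) measurableSet_Ioi
        (hint.mono Ioc_subset_Ioi_self le_rfl) (hint.mono (Ioi_subset_Ioi hu.le) le_rfl),
      Set.Ioc_union_Ioi_eq_Ioi hu.le]
  have hgauss : ∫ t in Ioi (0:ℝ), Real.exp (-t ^ 2) = Real.sqrt Real.pi / 2 := by
    have := integral_gaussian_Ioi 1
    simp only [neg_one_mul, div_one] at this
    simpa using this
  have h0u : ∫ t in (0:ℝ)..u, Real.exp (-t ^ 2) = ∫ t in Ioc 0 u, Real.exp (-t ^ 2) :=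
    intervalIntegral.integral_of_le hu.le
  have htail := tail_bound hu
  have : erf u = (2 / Real.sqrt Real.pi) * (Real.sqrt Real.pi / 2 - ∫ t in Ioi u, Real.exp (-t ^ 2)) := by
    rw [erf, h0u]
    congr 1
    linarith [hsplit, hgauss]
  rw [this]
  have key : (2 / Real.sqrt Real.pi) * (Real.sqrt Real.pi / 2 - ∫ t in Ioi u, Real.exp (-t ^ 2))
      ≥ (2 / Real.sqrt Real.pi) * (Real.sqrt Real.pi / 2 - Real.exp (-u ^ 2) / (2 * u)) := by
    apply mul_le_mul_of_nonneg_left _ (by positivity)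
    linarith
  have heq : (2 / Real.sqrt Real.pi) * (Real.sqrt Real.pi / 2 - Real.exp (-u ^ 2) / (2 * u))
      = 1 - Real.exp (-u ^ 2) / (u * Real.sqrt Real.pi) := by
    field_simp
  linarith [key, heq]

theorem stmt_0 : ∀ u : ℝ, 1 / Real.sqrt 2 < u → f u ≥ 1 - 1 / (u * Real.sqrt Real.pi) := by
  intro u hu
  have hu0 : 0 < u := lt_trans (by positivity) hu
  have h := erf_lower hu0
  have hsub : (1 - Real.exp (-u ^ 2)) / (u * Real.sqrt Real.pi)
      = 1 / (u * Real.sqrt Real.pi) - Real.exp (-u ^ 2) / (u * Real.sqrt Real.pi) :=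
    sub_div _ _ _
  rw [f, hsub]
  linarith
end

section
/- For all real u > 1/√2, the function f(u) = Erf(u) - (1 - exp(-u²))/(u√π) satisfies f(u) ≤ 1 - 1/(2u√π). -/
open Real MeasureTheory Set

lemma myint : MeasureTheory.Integrable (fun t : ℝ => Real.exp (-t ^ 2)) := by
  have := integrable_exp_neg_mul_sq (by norm_num : (0:ℝ) < 1)
  simpa using this

lemma key (u : ℝ) (hu : 0 < u) :
    ∫ t in (0:ℝ)..u, Real.exp (-t ^ 2)
      = Real.sqrt Real.pi / 2 - ∫ t in Set.Ioi u, Real.exp (-t ^ 2) := by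
  have h1 : ∫ t in Set.Ioi (0:ℝ), Real.exp (-t ^ 2) = Real.sqrt Real.pi / 2 := by
    have := integral_gaussian_Ioi 1
    simpa using this
  have hsplit : ∫ t in Set.Ioi (0:ℝ), Real.exp (-t ^ 2)
      = (∫ t in Set.Ioc (0:ℝ) u, Real.exp (-t ^ 2)) + ∫ t in Set.Ioi u, Real.exp (-t ^ 2) := by
    rw [← MeasureTheory.setIntegral_union Set.Ioc_disjoint_Ioi_same measurableSet_Ioi
      myint.integrableOn myint.integrableOn, Set.Ioc_union_Ioi_eq_Ioi hu.le]
  rw [intervalIntegral.integral_of_le hu.le]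
  linarith [hsplit, h1]

lemma tail_lb (u : ℝ) (hu : 0 < u) (hu1 : u ≤ 1) :
    (Real.exp (-u ^ 2) - Real.exp (-1)) / 2 ≤ ∫ t in Set.Ioi u, Real.exp (-t ^ 2) := by
  have hcalc : ∫ t in u..1, t * Real.exp (-t ^ 2)
      = (Real.exp (-u ^ 2) - Real.exp (-1)) / 2 := by
    have hderiv : ∀ t ∈ Set.uIcc u 1,
        HasDerivAt (fun s => -Real.exp (-s ^ 2) / 2) (t * Real.exp (-t ^ 2)) t := by
      intro t _
      have h := (((hasDerivAt_pow 2 t).neg).exp).neg.div_const 2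
      simp only [Pi.neg_apply] at h
      exact h.congr_deriv (by ring)
    have := intervalIntegral.integral_eq_sub_of_hasDerivAt hderiv
      (Continuous.intervalIntegrable (by continuity) u 1)
    rw [this]
    norm_num
    ring
  have h2 : ∫ t in u..1, t * Real.exp (-t ^ 2) ≤ ∫ t in u..1, Real.exp (-t ^ 2) := by
    apply intervalIntegral.integral_mono_on hu1
      (Continuous.intervalIntegrable (by continuity) u 1)
      (Continuous.intervalIntegrable (by continuity) u 1)
    intro t ht
    nlinarith [Real.exp_pos (-t ^ 2), ht.2]
  have h3 : ∫ t in u..1, Real.exp (-t ^ 2) ≤ ∫ t in Set.Ioi u, Real.exp (-t ^ 2) := by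
    rw [intervalIntegral.integral_of_le hu1]
    apply MeasureTheory.setIntegral_mono_set myint.integrableOn
      (Filter.Eventually.of_forall fun t => (Real.exp_pos _).le)
    exact (Set.Ioc_subset_Ioi_self).eventuallyLE
  linarith [hcalc ▸ h2, h3]

set_option maxHeartbeats 1000000 in
theorem stmt_1 : ∀ u : ℝ, 1 / Real.sqrt 2 < u → f u ≤ 1 - 1 / (2 * u * Real.sqrt Real.pi) := by
  intro u hu
  have hs2 : (1.414:ℝ) ≤ Real.sqrt 2 := by
    rw [show (1.414:ℝ) = Real.sqrt (1.414^2) by rw [Real.sqrt_sq]; norm_num]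
    apply Real.sqrt_le_sqrt; norm_num
  have hs2' : Real.sqrt 2 ≤ 1.41422 := by
    rw [show (1.41422:ℝ) = Real.sqrt (1.41422^2) by rw [Real.sqrt_sq]; norm_num]
    apply Real.sqrt_le_sqrt; norm_num
  have hs2pos : (0:ℝ) < Real.sqrt 2 := by linarith
  have hu0 : 0.707 < u := by
    have : (0.707:ℝ) ≤ 1 / Real.sqrt 2 := by
      rw [le_div_iff₀ hs2pos]; nlinarith
    linarith
  have hupos : 0 < u := by linarith
  have hπ : 0 < Real.sqrt Real.pi := Real.sqrt_pos.2 Real.pi_pos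
  set T := ∫ t in Set.Ioi u, Real.exp (-t ^ 2) with hT
  set x := Real.exp (-u ^ 2) with hx
  have hTpos : 0 ≤ T := by
    apply MeasureTheory.setIntegral_nonneg measurableSet_Ioi
    intro t _; exact (Real.exp_pos _).le
  -- exp bounds
  have he1 : (2.7182:ℝ) < Real.exp 1 := by linarith [Real.exp_one_gt_d9]
  have he1' : Real.exp 1 < 2.72 := by linarith [Real.exp_one_lt_d9]
  have hinv : Real.exp (-1) = 1 / Real.exp 1 := by
    rw [Real.exp_neg]; ring
  have hu2 : (1:ℝ)/2 ≤ u ^ 2 := by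
    have : (1 / Real.sqrt 2) ^ 2 ≤ u ^ 2 := by
      apply pow_le_pow_left₀ (by positivity) hu.le
    rw [div_pow, Real.sq_sqrt (by norm_num : (0:ℝ) ≤ 2)] at this
    simpa using this
  have hb : Real.exp (-(1/2) : ℝ) ≤ 0.6066 := by
    have hsq : Real.exp (-(1/2) : ℝ) * Real.exp (-(1/2) : ℝ) = Real.exp (-1) := by
      rw [← Real.exp_add]; norm_num
    have h0 : 0 < Real.exp (-(1/2) : ℝ) := Real.exp_pos _
    have hbb : Real.exp (-(1/2) : ℝ) * Real.exp (-(1/2) : ℝ) ≤ 0.36790 := by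
      rw [hsq, hinv, div_le_iff₀ (Real.exp_pos 1)]; nlinarith
    nlinarith [hbb, h0, sq_nonneg (Real.exp (-(1/2) : ℝ) - 0.6066)]
  have hxb : x ≤ 0.6066 := by
    have : x ≤ Real.exp (-(1/2) : ℝ) := by
      apply Real.exp_le_exp.2; linarith
    linarith
  have hinvlb : 0.367 ≤ Real.exp (-1) := by
    rw [hinv, le_div_iff₀ (Real.exp_pos 1)]; nlinarith
  -- core inequality: x ≤ 1/2 + 2 u T
  have hcore : x ≤ 1/2 + 2 * u * T := by
    rcases le_or_gt u 1 with h1 | h1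
    · have htl := tail_lb u hupos h1
      rw [← hT, ← hx] at htl
      have hinvub : Real.exp (-1) ≤ 0.3679 := by
        rw [hinv, div_le_iff₀ (Real.exp_pos 1)]; nlinarith
      nlinarith [htl, mul_nonneg (by linarith : (0:ℝ) ≤ 1 - u) (by linarith : (0:ℝ) ≤ 0.6066 - x),
        mul_nonneg hupos.le (by linarith : (0:ℝ) ≤ 0.3679 - Real.exp (-1)),
        mul_nonneg (by linarith : (0:ℝ) ≤ 2 * u) (by linarith : (0:ℝ) ≤ T - (x - Real.exp (-1)) / 2)]
    · have : x ≤ Real.exp (-1) := by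
        apply Real.exp_le_exp.2; nlinarith
      have : x ≤ 0.368 := by
        have h2 : Real.exp (-1) ≤ 0.368 := by
          rw [hinv, div_le_iff₀ (Real.exp_pos 1)]; nlinarith
        linarith
      nlinarith
  -- rewrite f
  have herf : erf u = 1 - 2 * T / Real.sqrt Real.pi := by
    rw [erf, key u hupos, ← hT]
    field_simp
  rw [f, herf, ← hx]
  have halg : 1 - 1 / (2 * u * Real.sqrt Real.pi)
      - (1 - 2 * T / Real.sqrt Real.pi - (1 - x) / (u * Real.sqrt Real.pi))
      = (1/2 + 2 * u * T - x) / (u * Real.sqrt Real.pi) := by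
    field_simp
    ring
  have : 0 ≤ (1/2 + 2 * u * T - x) / (u * Real.sqrt Real.pi) := by
    apply div_nonneg (by linarith) (by positivity)
  linarith [halg ▸ this]
end

section
/- For all real u with 0 < u ≤ 1/√2, the function f(u) = Erf(u) - (1 - exp(-u²))/(u√π) satisfies f(u) ≥ 2u/(3√π). -/
open Real

lemma integral_lb (u : ℝ) (hu : 0 < u) :
    u - u ^ 3 / 3 ≤ ∫ t in (0:ℝ)..u, Real.exp (-t ^ 2) := by
  have h1 : (∫ t in (0:ℝ)..u, (1 - t ^ 2)) = u - u ^ 3 / 3 := by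
    have : (∫ t in (0:ℝ)..u, (1 - t ^ 2)) =
        (∫ t in (0:ℝ)..u, (1:ℝ)) - ∫ t in (0:ℝ)..u, t ^ 2 := by
      apply intervalIntegral.integral_sub <;>
        exact (by continuity : Continuous _).intervalIntegrable 0 u
    rw [this, integral_pow]
    simp
    ring
  rw [← h1]
  apply intervalIntegral.integral_mono_on hu.le
  · exact (by continuity : Continuous fun t : ℝ => 1 - t ^ 2).intervalIntegrable 0 u
  · exact (by continuity : Continuous fun t : ℝ => Real.exp (-t ^ 2)).intervalIntegrable 0 u
  · intro t _
    have := Real.add_one_le_exp (-t ^ 2)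
    linarith

theorem stmt_2 : ∀ u : ℝ, 0 < u → u ≤ 1 / Real.sqrt 2 → f u ≥ 2 * u / (3 * Real.sqrt Real.pi) := by
  intro u hu hle
  have hpi : 0 < Real.sqrt Real.pi := Real.sqrt_pos.mpr Real.pi_pos
  have hu2 : u ^ 2 ≤ 1 / 2 := by
    have h2 : (0:ℝ) < Real.sqrt 2 := by positivity
    have := pow_le_pow_left₀ hu.le hle 2
    calc u ^ 2 ≤ (1 / Real.sqrt 2) ^ 2 := this
      _ = 1 / 2 := by
          rw [div_pow, one_pow, sq_sqrt (by norm_num : (2:ℝ) ≥ 0)]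
  have hint := integral_lb u hu
  have hexp : 1 - Real.exp (-u ^ 2) ≤ u ^ 2 := by
    have := Real.add_one_le_exp (-u ^ 2)
    linarith
  have h1 : (1 - Real.exp (-u ^ 2)) / (u * Real.sqrt Real.pi) ≤ u / Real.sqrt Real.pi := by
    rw [div_le_div_iff₀ (by positivity) hpi]
    calc (1 - Real.exp (-u ^ 2)) * Real.sqrt Real.pi ≤ u ^ 2 * Real.sqrt Real.pi := by
          apply mul_le_mul_of_nonneg_right hexp hpi.le
      _ = u * (u * Real.sqrt Real.pi) := by ring
  have h2 : (2 / Real.sqrt Real.pi) * (u - u ^ 3 / 3) ≤ erf u := by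
    unfold erf
    apply mul_le_mul_of_nonneg_left hint (by positivity)
  have key : (2 / Real.sqrt Real.pi) * (u - u ^ 3 / 3) - u / Real.sqrt Real.pi
      ≥ 2 * u / (3 * Real.sqrt Real.pi) := by
    rw [ge_iff_le, div_le_iff₀ (by positivity)]
    have : (2 / Real.sqrt Real.pi) * (u - u ^ 3 / 3) - u / Real.sqrt Real.pi
        = (u - 2 * u ^ 3 / 3) / Real.sqrt Real.pi := by
      field_simp
      ring
    rw [this, div_mul_eq_mul_div, le_div_iff₀ hpi]
    have : u * (1/2) ≥ u * u ^ 2 := mul_le_mul_of_nonneg_left hu2 hu.le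
    nlinarith [sq_nonneg (Real.sqrt Real.pi), hpi]
  unfold f
  linarith
end

section
/- For all real u with 0 < u ≤ 1/√2, the function f(u) = Erf(u) - (1 - exp(-u²))/(u√π) satisfies f(u) ≤ u/√π. -/
open Real

lemma exp_neg_le_quad {x : ℝ} (hx : 0 ≤ x) : Real.exp (-x) ≤ 1 - x + x ^ 2 / 2 := by
  have h := Real.quadratic_le_exp_of_nonneg hx
  have hq : (0:ℝ) < 1 - x + x ^ 2 / 2 := by nlinarith [sq_nonneg (x - 1)]
  have key : 1 ≤ (1 - x + x ^ 2 / 2) * Real.exp x := by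
    nlinarith [mul_le_mul_of_nonneg_left h hq.le, sq_nonneg (x ^ 2)]
  rw [Real.exp_neg, ← one_div, div_le_iff₀ (Real.exp_pos x)]
  linarith

theorem stmt_3 : ∀ u : ℝ, 0 < u → u ≤ 1 / Real.sqrt 2 → f u ≤ u / Real.sqrt Real.pi := by
  intro u hu hu2
  have hsqpi : (0:ℝ) < Real.sqrt Real.pi := Real.sqrt_pos.mpr Real.pi_pos
  have husq : u ^ 2 ≤ 1 / 2 := by
    have hs : Real.sqrt 2 ^ 2 = 2 := Real.sq_sqrt (by norm_num)
    calc u ^ 2 ≤ (1 / Real.sqrt 2) ^ 2 := by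
          apply pow_le_pow_left₀ hu.le hu2
      _ = 1 / 2 := by rw [div_pow, hs]; norm_num
  have hInt : (∫ t in (0:ℝ)..u, Real.exp (-t ^ 2)) ≤ u - u ^ 3 / 3 + u ^ 5 / 10 := by
    have hle : (∫ t in (0:ℝ)..u, Real.exp (-t ^ 2)) ≤ ∫ t in (0:ℝ)..u, (1 - t ^ 2 + t ^ 4 / 2) := by
      apply intervalIntegral.integral_mono_on hu.le
      · apply Continuous.intervalIntegrable; continuity
      · apply Continuous.intervalIntegrable; continuity
      · intro t ht
        have h := exp_neg_le_quad (sq_nonneg t)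
        nlinarith [h]
    have hval : (∫ t in (0:ℝ)..u, (1 - t ^ 2 + t ^ 4 / 2)) = u - u ^ 3 / 3 + u ^ 5 / 10 := by
      have hderiv : ∀ t ∈ Set.uIcc (0:ℝ) u,
          HasDerivAt (fun s : ℝ => s - s ^ 3 / 3 + s ^ 5 / 10) (1 - t ^ 2 + t ^ 4 / 2) t := by
        intro t _
        have h := ((hasDerivAt_id t).sub ((hasDerivAt_pow 3 t).div_const 3)).add
          ((hasDerivAt_pow 5 t).div_const 10)
        refine h.congr_deriv ?_
        push_cast
        ring
      rw [intervalIntegral.integral_eq_sub_of_hasDerivAt hderiv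
        (by apply Continuous.intervalIntegrable; continuity)]
      norm_num
    linarith
  have hExp : Real.exp (-u ^ 2) ≤ 1 - u ^ 2 + u ^ 4 / 2 := by
    have h := exp_neg_le_quad (sq_nonneg u)
    nlinarith [h]
  set I := (∫ t in (0:ℝ)..u, Real.exp (-t ^ 2)) with hI
  have key : 2 * I - (1 - Real.exp (-u ^ 2)) / u ≤ u := by
    have h1 : (u ^ 2 - u ^ 4 / 2) / u ≤ (1 - Real.exp (-u ^ 2)) / u := by
      rw [div_le_div_iff₀ hu hu]
      nlinarith
    have h2 : (u ^ 2 - u ^ 4 / 2) / u = u - u ^ 3 / 2 := by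
      field_simp
    have h3 : u ^ 5 / 5 ≤ u ^ 3 / 10 := by
      nlinarith [mul_le_mul_of_nonneg_left husq (pow_nonneg hu.le 3)]
    nlinarith [pow_pos hu 3]
  have heq : (2 / Real.sqrt Real.pi) * I - (1 - Real.exp (-u ^ 2)) / (u * Real.sqrt Real.pi)
      = (2 * I - (1 - Real.exp (-u ^ 2)) / u) / Real.sqrt Real.pi := by
    field_simp
  unfold f erf
  rw [← hI, heq]
  gcongr
end

section
/- Let p_r(z) denote the E²LSH collision probability p_r(z) = Erf(r/(√2 z)) - √(2/π)·(z/r)·(1 - exp(-r²/(2z²))) for z, r > 0. Then for z < r, 1 - √(2/π)·(z/r) ≤ p_r(z) ≤ 1 - √(1/(2π))·(z/r), and for z ≥ r, (√2/(3√π))·(r/z) ≤ p_r(z) ≤ (1/√(2π))·(r/z). -/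
open MeasureTheory Set Filter

namespace Stmt9Aux

lemma cont_g : Continuous fun t : ℝ => Real.exp (-t ^ 2) :=
  Real.continuous_exp.comp (continuous_pow 2).neg

lemma int_g : Integrable (fun t : ℝ => Real.exp (-t ^ 2)) := by
  simpa using integrable_exp_neg_mul_sq (b := 1) one_pos

lemma int_tg : Integrable (fun t : ℝ => t * Real.exp (-t ^ 2)) := by
  simpa using integrable_mul_exp_neg_mul_sq (b := 1) one_pos

lemma hasDeriv_F (t : ℝ) :
    HasDerivAt (fun t : ℝ => -Real.exp (-t ^ 2) / 2) (t * Real.exp (-t ^ 2)) t := by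
  have h1 : HasDerivAt (fun t : ℝ => -t ^ 2) (-(2 * t)) t := by
    simpa using (hasDerivAt_pow 2 t).fun_neg
  have h3 := (h1.exp.fun_neg).div_const 2
  refine h3.congr_deriv ?_
  ring

lemma B_eval (u : ℝ) :
    ∫ t in (0:ℝ)..u, t * Real.exp (-t ^ 2) = (1 - Real.exp (-u ^ 2)) / 2 := by
  rw [intervalIntegral.integral_eq_sub_of_hasDerivAt (fun t _ => hasDeriv_F t)
      (((continuous_id' : Continuous fun t : ℝ => t).mul cont_g).intervalIntegrable _ _)]
  norm_num
  ring

lemma tail_tg (u : ℝ) :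
    ∫ t in Ioi u, t * Real.exp (-t ^ 2) = Real.exp (-u ^ 2) / 2 := by
  have htend : Tendsto (fun y : ℝ => -Real.exp (-y ^ 2) / 2) atTop (nhds 0) := by
    have h1 : Tendsto (fun y : ℝ => -y ^ 2) atTop atBot :=
      tendsto_neg_atTop_atBot.comp (tendsto_pow_atTop two_ne_zero)
    have h2 : Tendsto (fun y : ℝ => Real.exp (-y ^ 2)) atTop (nhds 0) :=
      Real.tendsto_exp_atBot.comp h1
    simpa using (h2.neg).div_const 2
  have := integral_Ioi_of_hasDerivAt_of_tendsto' (a := u)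
    (fun x _ => hasDeriv_F x) int_tg.integrableOn htend
  rw [this]; ring

lemma G_eval : ∫ t in Ioi (0:ℝ), Real.exp (-t ^ 2) = Real.sqrt Real.pi / 2 := by
  simpa using integral_gaussian_Ioi 1

lemma split (u : ℝ) (hu : 0 ≤ u) :
    (∫ t in (0:ℝ)..u, Real.exp (-t ^ 2)) + ∫ t in Ioi u, Real.exp (-t ^ 2)
      = Real.sqrt Real.pi / 2 := by
  rw [intervalIntegral.integral_of_le hu, ← G_eval,
    ← MeasureTheory.setIntegral_union (Set.Ioc_disjoint_Ioi le_rfl) measurableSet_Ioi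
      int_g.integrableOn int_g.integrableOn, Set.Ioc_union_Ioi_eq_Ioi hu]

lemma tail_nonneg (u : ℝ) : 0 ≤ ∫ t in Ioi u, Real.exp (-t ^ 2) :=
  setIntegral_nonneg measurableSet_Ioi (fun t _ => (Real.exp_pos _).le)

lemma tail_le {u : ℝ} (hu : 0 < u) :
    ∫ t in Ioi u, Real.exp (-t ^ 2) ≤ Real.exp (-u ^ 2) / (2 * u) := by
  have h1 : ∫ t in Ioi u, Real.exp (-t ^ 2) ≤ ∫ t in Ioi u, (1/u) * (t * Real.exp (-t ^ 2)) := by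
    apply setIntegral_mono_on int_g.integrableOn
      ((int_tg.const_mul (1/u)).integrableOn) measurableSet_Ioi
    intro t ht
    have ht' : u ≤ t := (le_of_lt ht)
    have h2 : 1 ≤ t / u := (one_le_div hu).2 ht'
    have := Real.exp_pos (-t ^ 2)
    rw [show (1/u) * (t * Real.exp (-t ^ 2)) = (t/u) * Real.exp (-t ^ 2) by ring]
    nlinarith
  calc ∫ t in Ioi u, Real.exp (-t ^ 2) ≤ _ := h1
    _ = (1/u) * ∫ t in Ioi u, t * Real.exp (-t ^ 2) := integral_const_mul _ _
    _ = Real.exp (-u ^ 2) / (2 * u) := by rw [tail_tg]; field_simp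

lemma tail_ge {u : ℝ} (hu : 0 < u) :
    (Real.sqrt 2 - 1) * u * Real.exp (-(2 * u ^ 2)) ≤ ∫ t in Ioi u, Real.exp (-t ^ 2) := by
  set v := Real.sqrt 2 * u with hv
  have h2 : (1:ℝ) ≤ Real.sqrt 2 := by
    rw [show (1:ℝ) = Real.sqrt 1 by simp]
    exact Real.sqrt_le_sqrt (by norm_num)
  have huv : u ≤ v := by nlinarith
  have hv2 : v ^ 2 = 2 * u ^ 2 := by
    rw [hv, mul_pow, Real.sq_sqrt (by norm_num : (0:ℝ) ≤ 2)]
  have hadj : (∫ t in (0:ℝ)..u, Real.exp (-t ^ 2)) + ∫ t in u..v, Real.exp (-t ^ 2)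
      = ∫ t in (0:ℝ)..v, Real.exp (-t ^ 2) :=
    intervalIntegral.integral_add_adjacent_intervals (cont_g.intervalIntegrable _ _)
      (cont_g.intervalIntegrable _ _)
  have hsu := split u hu.le
  have hsv := split v (by nlinarith)
  have hconst : (v - u) * Real.exp (-(2 * u ^ 2)) ≤ ∫ t in u..v, Real.exp (-t ^ 2) := by
    have := intervalIntegral.integral_mono_on (f := fun _ : ℝ => Real.exp (-(2 * u ^ 2)))
      (g := fun t : ℝ => Real.exp (-t ^ 2)) huv (intervalIntegrable_const (μ := volume))
      (cont_g.intervalIntegrable _ _) ?_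
    · simpa using this
    · intro t ht
      rw [Real.exp_le_exp, ← hv2]
      have h1 := ht.1; have h2' := ht.2
      nlinarith
  have htnn := tail_nonneg v
  have : (v - u) * Real.exp (-(2 * u ^ 2)) = (Real.sqrt 2 - 1) * u * Real.exp (-(2 * u ^ 2)) := by
    rw [hv]; ring
  linarith

noncomputable def A (u : ℝ) : ℝ := ∫ t in (0:ℝ)..u, Real.exp (-t ^ 2)

lemma key {u : ℝ} (hu : 0 < u) :
    ∫ t in (0:ℝ)..u, (1 - t/u) * Real.exp (-t ^ 2)
      = A u - (1 - Real.exp (-u ^ 2)) / (2 * u) := by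
  have h1 : ∀ t : ℝ, (1 - t/u) * Real.exp (-t ^ 2)
      = Real.exp (-t ^ 2) - (1/u) * (t * Real.exp (-t ^ 2)) := fun t => by ring
  simp_rw [h1]
  rw [intervalIntegral.integral_sub (cont_g.intervalIntegrable _ _)
      ((continuous_const.fun_mul ((continuous_id' : Continuous fun t : ℝ => t).fun_mul cont_g)).intervalIntegrable _ _),
    intervalIntegral.integral_const_mul, B_eval, A]
  have : u ≠ 0 := ne_of_gt hu
  field_simp

lemma small_upper {u : ℝ} (hu : 0 < u) :
    A u - (1 - Real.exp (-u ^ 2)) / (2 * u) ≤ u / 2 := by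
  rw [← key hu]
  have h2 : ∫ t in (0:ℝ)..u, (1 - t/u) = u / 2 := by
    rw [intervalIntegral.integral_sub (intervalIntegrable_const)
        (((continuous_id' : Continuous fun t : ℝ => t).div_const u).intervalIntegrable _ _)]
    simp only [intervalIntegral.integral_div, integral_id]
    simp
    field_simp
    ring
  rw [← h2]
  apply intervalIntegral.integral_mono_on hu.le
    (((continuous_const.sub ((continuous_id' : Continuous fun t : ℝ => t).div_const u)).mul cont_g).intervalIntegrable _ _)
    ((continuous_const.sub ((continuous_id' : Continuous fun t : ℝ => t).div_const u)).intervalIntegrable _ _)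
  intro t ht
  have he : Real.exp (-t ^ 2) ≤ 1 := Real.exp_le_one_iff.2 (by nlinarith)
  have htu : t / u ≤ 1 := (div_le_one hu).2 ht.2
  simp only [Pi.mul_apply, Pi.sub_apply]
  nlinarith [Real.exp_pos (-t ^ 2)]

lemma small_lower {u : ℝ} (hu : 0 < u) (hu2 : u ^ 2 ≤ 2) :
    u / 3 ≤ A u - (1 - Real.exp (-u ^ 2)) / (2 * u) := by
  rw [← key hu]
  have hune : u ≠ 0 := ne_of_gt hu
  have hF : ∀ t : ℝ, HasDerivAt (fun t : ℝ => t - t^2/(2*u) - t^3/3 + t^4/(4*u))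
      ((1 - t/u) * (1 - t^2)) t := by
    intro t
    have h := (((hasDerivAt_id t).fun_sub ((hasDerivAt_pow 2 t).div_const (2*u))).fun_sub
      ((hasDerivAt_pow 3 t).div_const 3)).fun_add ((hasDerivAt_pow 4 t).div_const (4*u))
    refine h.congr_deriv ?_
    field_simp
    ring
  have hpoly : ∫ t in (0:ℝ)..u, (1 - t/u) * (1 - t^2) = u/2 - u^3/12 := by
    rw [intervalIntegral.integral_eq_sub_of_hasDerivAt (fun t _ => hF t)
      (((continuous_const.sub ((continuous_id' : Continuous fun t : ℝ => t).div_const u)).mul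
        (continuous_const.sub (continuous_pow 2))).intervalIntegrable _ _)]
    field_simp
    ring
  have hmono : ∫ t in (0:ℝ)..u, (1 - t/u) * (1 - t^2)
      ≤ ∫ t in (0:ℝ)..u, (1 - t/u) * Real.exp (-t ^ 2) := by
    apply intervalIntegral.integral_mono_on hu.le
      (((continuous_const.sub ((continuous_id' : Continuous fun t : ℝ => t).div_const u)).mul
        (continuous_const.sub (continuous_pow 2))).intervalIntegrable _ _)
      (((continuous_const.sub ((continuous_id' : Continuous fun t : ℝ => t).div_const u)).mul cont_g).intervalIntegrable _ _)
    intro t ht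
    have he : 1 - t^2 ≤ Real.exp (-t ^ 2) := by
      have := Real.add_one_le_exp (-t ^ 2)
      linarith
    have htu : t / u ≤ 1 := (div_le_one hu).2 ht.2
    simp only [Pi.mul_apply, Pi.sub_apply]
    nlinarith
  nlinarith [hmono, hpoly]

lemma large_lower {u : ℝ} (hu : 0 < u) :
    Real.sqrt Real.pi / 2 - 1 / (2 * u) ≤ A u - (1 - Real.exp (-u ^ 2)) / (2 * u) := by
  have hs := split u hu.le
  have ht := tail_le hu
  have hx : Real.exp (-u ^ 2) / (2 * u) + (1 - Real.exp (-u ^ 2)) / (2 * u) = 1 / (2 * u) := by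
    ring
  rw [A]
  linarith

lemma large_upper {u : ℝ} (hu : 0 < u) (hu2 : 1 ≤ 2 * u ^ 2) :
    A u - (1 - Real.exp (-u ^ 2)) / (2 * u) ≤ Real.sqrt Real.pi / 2 - 1 / (4 * u) := by
  have hs := split u hu.le
  have ht := tail_ge hu
  set s := Real.exp (-u ^ 2) with hsdef
  have hs_pos : 0 < s := Real.exp_pos _
  have hsq : Real.exp (-(2 * u ^ 2)) = s ^ 2 := by
    have h : s ^ 2 = Real.exp (-u ^ 2 + -u ^ 2) := by rw [Real.exp_add, hsdef, sq]
    rw [h]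
    congr 1
    ring
  have hs61 : s ≤ 0.61 := by
    have h1 : s ^ 2 = Real.exp (-(2 * u ^ 2)) := hsq.symm
    have h2 : Real.exp (-(2 * u ^ 2)) ≤ Real.exp (-1) := Real.exp_le_exp.2 (by linarith)
    have h3 : Real.exp (-1) = 1 / Real.exp 1 := by rw [Real.exp_neg]; ring
    have h4 : (2.7182818283 : ℝ) < Real.exp 1 := Real.exp_one_gt_d9
    have h5 : Real.exp (-1) < 0.3721 := by
      rw [h3, div_lt_iff₀ (by positivity)]
      nlinarith
    nlinarith
  have h41 : (1.41 : ℝ) ≤ Real.sqrt 2 := by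
    rw [show (1.41:ℝ) = Real.sqrt (1.41^2) by rw [Real.sqrt_sq (by norm_num)]]
    exact Real.sqrt_le_sqrt (by norm_num)
  have hprod : (0.205 : ℝ) ≤ (Real.sqrt 2 - 1) * u ^ 2 := by nlinarith
  have hkey : 1 / (4 * u) ≤ (Real.sqrt 2 - 1) * u * s ^ 2 + (1 - s) / (2 * u) := by
    rw [div_le_iff₀ (by positivity : (0:ℝ) < 4 * u)]
    have hexpand : ((Real.sqrt 2 - 1) * u * s ^ 2 + (1 - s) / (2 * u)) * (4 * u)
        = 4 * ((Real.sqrt 2 - 1) * u ^ 2) * s ^ 2 + 2 * (1 - s) := by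
      field_simp
      ring
    rw [hexpand]
    nlinarith [sq_nonneg (s - 0.61), mul_le_mul_of_nonneg_right hprod (sq_nonneg s)]
  rw [A]
  rw [hsq] at ht
  linarith

end Stmt9Aux

noncomputable def p (r z : ℝ) : ℝ :=
  erf (r / (Real.sqrt 2 * z)) -
    Real.sqrt (2 / Real.pi) * (z / r) * (1 - Real.exp (-(r ^ 2 / (2 * z ^ 2))))

theorem stmt_9 (r z : ℝ) (hz : 0 < z) (hr : 0 < r) :
    (z < r →
      1 - Real.sqrt (2 / Real.pi) * (z / r) ≤ p r z ∧
      p r z ≤ 1 - Real.sqrt (1 / (2 * Real.pi)) * (z / r)) ∧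
    (r ≤ z →
      Real.sqrt 2 / (3 * Real.sqrt Real.pi) * (r / z) ≤ p r z ∧
      p r z ≤ 1 / Real.sqrt (2 * Real.pi) * (r / z)) := by
  have hπ : 0 < Real.pi := Real.pi_pos
  have hsπ : 0 < Real.sqrt Real.pi := Real.sqrt_pos.2 hπ
  have hs2 : 0 < Real.sqrt 2 := Real.sqrt_pos.2 two_pos
  have h22 : Real.sqrt 2 * Real.sqrt 2 = 2 := Real.mul_self_sqrt (by norm_num)
  have h2sq : Real.sqrt 2 ^ 2 = 2 := Real.sq_sqrt (by norm_num)
  set u := r / (Real.sqrt 2 * z) with hudef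
  have hu : 0 < u := div_pos hr (by positivity)
  have hu2 : r ^ 2 / (2 * z ^ 2) = u ^ 2 := by
    have hsq : (Real.sqrt 2) ^ 2 = 2 := Real.sq_sqrt (by norm_num)
    rw [hudef, div_pow, mul_pow, hsq]
  have hzr : z / r = 1 / (Real.sqrt 2 * u) := by
    rw [hudef]
    field_simp
  have hrz : r / z = Real.sqrt 2 * u := by
    rw [hudef]
    field_simp
  clear_value u
  have hsqrt2pi : Real.sqrt (2 / Real.pi) = Real.sqrt 2 / Real.sqrt Real.pi :=
    Real.sqrt_div (by norm_num) _
  have hsqrt2pi' : Real.sqrt (2 * Real.pi) = Real.sqrt 2 * Real.sqrt Real.pi :=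
    Real.sqrt_mul (by norm_num) _
  have hsqrtinv : Real.sqrt (1 / (2 * Real.pi)) = 1 / (Real.sqrt 2 * Real.sqrt Real.pi) := by
    rw [one_div, Real.sqrt_inv, hsqrt2pi', one_div]
  have hp : p r z = 2 / Real.sqrt Real.pi *
      (Stmt9Aux.A u - (1 - Real.exp (-u ^ 2)) / (2 * u)) := by
    rw [p, erf, ← hudef, hu2, hzr, hsqrt2pi, Stmt9Aux.A]
    field_simp
  constructor
  · intro hzltr
    have h2u2 : 1 ≤ 2 * u ^ 2 := by
      have hq : 2 * u ^ 2 = r ^ 2 / z ^ 2 := by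
        rw [← hu2]; field_simp
      rw [hq]
      rw [le_div_iff₀ (by positivity)]
      nlinarith
    constructor
    · have eqL : 1 - Real.sqrt (2 / Real.pi) * (z / r)
          = 2 / Real.sqrt Real.pi * (Real.sqrt Real.pi / 2 - 1 / (2 * u)) := by
        rw [hzr, hsqrt2pi]
        field_simp
      rw [eqL, hp]
      exact mul_le_mul_of_nonneg_left (Stmt9Aux.large_lower hu) (by positivity)
    · have eqU : 1 - Real.sqrt (1 / (2 * Real.pi)) * (z / r)
          = 2 / Real.sqrt Real.pi * (Real.sqrt Real.pi / 2 - 1 / (4 * u)) := by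
        rw [hzr, hsqrtinv]
        field_simp
        linear_combination 2 * h22
      rw [eqU, hp]
      exact mul_le_mul_of_nonneg_left (Stmt9Aux.large_upper hu h2u2) (by positivity)
  · intro hrlez
    have hu22 : u ^ 2 ≤ 2 := by
      have hq : 2 * u ^ 2 = r ^ 2 / z ^ 2 := by
        rw [← hu2]; field_simp
      have : r ^ 2 / z ^ 2 ≤ 1 := by
        rw [div_le_one (by positivity)]
        nlinarith
      nlinarith
    constructor
    · have eqL : Real.sqrt 2 / (3 * Real.sqrt Real.pi) * (r / z)
          = 2 / Real.sqrt Real.pi * (u / 3) := by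
        rw [hrz]
        field_simp
        linear_combination h22
      rw [eqL, hp]
      exact mul_le_mul_of_nonneg_left (Stmt9Aux.small_lower hu hu22) (by positivity)
    · have eqU : 1 / Real.sqrt (2 * Real.pi) * (r / z)
          = 2 / Real.sqrt Real.pi * (u / 2) := by
        rw [hrz, hsqrt2pi']
        field_simp
      rw [eqU, hp]
      exact mul_le_mul_of_nonneg_left (Stmt9Aux.small_upper hu) (by positivity)
end

section
/- Define f(u) = Erf(u) − (1 − exp(−u²))/(u√π) for u > 0. Then f is strictly increasing on (0, ∞). -/
lemma f_hasDerivAt {u : ℝ} (hu : 0 < u) :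
    HasDerivAt f ((1 - Real.exp (-u ^ 2)) / (Real.sqrt Real.pi * u ^ 2)) u := by
  have hπ : 0 < Real.sqrt Real.pi := Real.sqrt_pos.mpr Real.pi_pos
  have hne : u * Real.sqrt Real.pi ≠ 0 := by positivity
  have hcont : Continuous fun t : ℝ => Real.exp (-t ^ 2) := by continuity
  have h1 : HasDerivAt erf (2 / Real.sqrt Real.pi * Real.exp (-u ^ 2)) u := by
    have := ((hcont.integral_hasStrictDerivAt 0 u).hasDerivAt).const_mul
      (2 / Real.sqrt Real.pi)
    exact this
  have h2 : HasDerivAt (fun u : ℝ => (1 - Real.exp (-u ^ 2)) / (u * Real.sqrt Real.pi))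
      (((2 * u * Real.exp (-u ^ 2)) * (u * Real.sqrt Real.pi) -
        (1 - Real.exp (-u ^ 2)) * Real.sqrt Real.pi) / (u * Real.sqrt Real.pi) ^ 2) u := by
    have hnum : HasDerivAt (fun u : ℝ => 1 - Real.exp (-u ^ 2)) (2 * u * Real.exp (-u ^ 2)) u := by
      have h : HasDerivAt (fun u : ℝ => -u ^ 2) (-(2 * u)) u := by
        simpa using ((hasDerivAt_pow 2 u).fun_neg)
      have := (h.exp).const_sub 1
      refine this.congr_deriv ?_
      ring
    have hden : HasDerivAt (fun u : ℝ => u * Real.sqrt Real.pi) (Real.sqrt Real.pi) u := by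
      simpa using (hasDerivAt_id u).mul_const (Real.sqrt Real.pi)
    exact hnum.div hden hne
  have := h1.sub h2
  refine this.congr_deriv ?_
  field_simp
  ring

theorem stmt_19 : StrictMonoOn f (Set.Ioi (0:ℝ)) := by
  apply StrictMonoOn.mono (s := Set.Ioi 0) ?_ (le_refl _)
  have : StrictMonoOn f (Set.Ioi (0:ℝ)) := by
    apply strictMonoOn_of_deriv_pos (convex_Ioi 0)
    · intro x hx
      exact (f_hasDerivAt hx).continuousAt.continuousWithinAt
    · intro x hx
      rw [interior_Ioi] at hx
      have hx' : (0:ℝ) < x := hx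
      rw [(f_hasDerivAt hx').deriv]
      have h1 : 0 < 1 - Real.exp (-x ^ 2) := by
        have : Real.exp (-x ^ 2) < 1 := by
          rw [Real.exp_lt_one_iff]
          nlinarith [mul_pos hx' hx']
        linarith
      have : 0 < Real.sqrt Real.pi := Real.sqrt_pos.mpr Real.pi_pos
      positivity
  exact this
end
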